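/- Let μ_j, ν_j be tight probability measures on a metric space X. If ∫ f dμ_j − ∫ f dν_j → 0 for every bounded uniformly continuous function f on X, then ‖μ_j − ν_j‖_d → 0 in the bounded-Lipschitz norm. -/

import Mathlib

open MeasureTheory Filter Metric Set
open scoped ENNReal NNReal

set_option linter.unusedSectionVars false
set_option maxHeartbeats 1000000

namespace BLProofAux

variable {X : Type*} [MetricSpace X] [MeasurableSpace X] [BorelSpace X]

/-- real-valued Lipschitz bound predicate -/
def lipb (L : ℝ) (f : X → ℝ) : Prop := ∀ x y : X, |f x - f y| ≤ L * dist x y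

lemma lipb.mono {L L' : ℝ} {f : X → ℝ} (h : lipb L f) (hL : L ≤ L') : lipb L' f := by
  intro x y
  exact (h x y).trans (by nlinarith [dist_nonneg (x := x) (y := y)])

lemma lipb.uniformContinuous {L : ℝ} {f : X → ℝ} (h : lipb L f) : UniformContinuous f := by
  rw [Metric.uniformContinuous_iff]
  intro ε hε
  refine ⟨ε / (|L| + 1), by positivity, fun {a b} hab => ?_⟩
  have h1 := h a b
  have h2 : |f a - f b| ≤ (|L| + 1) * dist a b := by
    refine h1.trans ?_
    have : L ≤ |L| + 1 := (le_abs_self L).trans (by linarith)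
    nlinarith [dist_nonneg (x := a) (y := b)]
  have h3 : (|L| + 1) * dist a b < (|L| + 1) * (ε / (|L| + 1)) := by
    have : (0:ℝ) < |L| + 1 := by positivity
    exact (mul_lt_mul_iff_right₀ this).mpr hab
  have h4 : (|L| + 1) * (ε / (|L| + 1)) = ε := by
    field_simp
  rw [Real.dist_eq]
  calc |f a - f b| ≤ (|L|+1) * dist a b := h2
    _ < ε := by rw [h4] at h3; exact h3

lemma lipb.continuous {L : ℝ} {f : X → ℝ} (h : lipb L f) : Continuous f :=
  h.uniformContinuous.continuous

/-- product rule for bounded lipschitz functions -/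
lemma lipb.mul {L M : ℝ} {f g : X → ℝ} (hf : lipb L f) (hg : lipb M g)
    (hfb : ∀ x, |f x| ≤ 1) (hgb : ∀ x, |g x| ≤ 1) : lipb (L + M) (fun x => f x * g x) := by
  intro x y
  have : f x * g x - f y * g y = f x * (g x - g y) + g y * (f x - f y) := by ring
  rw [this]
  calc |f x * (g x - g y) + g y * (f x - f y)|
      ≤ |f x * (g x - g y)| + |g y * (f x - f y)| := abs_add_le _ _
    _ = |f x| * |g x - g y| + |g y| * |f x - f y| := by rw [abs_mul, abs_mul]
    _ ≤ 1 * (M * dist x y) + 1 * (L * dist x y) := by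
        have e1 : |f x| * |g x - g y| ≤ 1 * (M * dist x y) :=
          mul_le_mul (hfb x) (hg x y) (abs_nonneg _) one_pos.le
        have e2 : |g y| * |f x - f y| ≤ 1 * (L * dist x y) :=
          mul_le_mul (hgb y) (hf x y) (abs_nonneg _) one_pos.le
        linarith
    _ = (L + M) * dist x y := by ring

lemma lipb_infDist (s : Set X) : lipb 1 (fun x => infDist x s) := by
  intro x y
  rw [abs_sub_le_iff]
  constructor
  · linarith [infDist_le_infDist_add_dist (x := x) (y := y) (s := s)]
  · linarith [infDist_le_infDist_add_dist (x := y) (y := x) (s := s), dist_comm x y]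

lemma abs_max_sub_max (a b c : ℝ) : |max a b - max a c| ≤ |b - c| := by
  rcases le_total a b with h1 | h1 <;> rcases le_total a c with h2 | h2 <;>
    simp [max_eq_right, max_eq_left, h1, h2, abs_sub_le_iff] <;>
    cases abs_cases (b - c) <;> constructor <;> linarith

lemma abs_min_sub_min (a b c : ℝ) : |min a b - min a c| ≤ |b - c| := by
  rcases le_total b a with h1 | h1 <;> rcases le_total c a with h2 | h2 <;>
    simp [min_eq_right, min_eq_left, h1, h2, abs_sub_le_iff] <;>
    cases abs_cases (b - c) <;> constructor <;> linarith

lemma lipb.comp_max_min {L : ℝ} {f : X → ℝ} (h : lipb L f) (a b : ℝ) :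
    lipb L (fun x => max a (min b (f x))) := by
  intro x y
  calc |max a (min b (f x)) - max a (min b (f y))| ≤ |min b (f x) - min b (f y)| :=
        abs_max_sub_max a _ _
    _ ≤ |f x - f y| := abs_min_sub_min b _ _
    _ ≤ L * dist x y := h x y

lemma lipb.sub_const {L : ℝ} {f : X → ℝ} (h : lipb L f) (c : ℝ) :
    lipb L (fun x => c - f x) := by
  intro x y
  have : c - f x - (c - f y) = -(f x - f y) := by ring
  rw [this, abs_neg]
  exact h x y

lemma lipb.const_mul {L : ℝ} {f : X → ℝ} (h : lipb L f) (c : ℝ) :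
    lipb (|c| * L) (fun x => c * f x) := by
  intro x y
  have : c * f x - c * f y = c * (f x - f y) := by ring
  rw [this, abs_mul, mul_assoc]
  exact mul_le_mul_of_nonneg_left (h x y) (abs_nonneg c)

end BLProofAux

namespace Part2
open BLProofAux

variable {X : Type*} [MetricSpace X] [MeasurableSpace X] [BorelSpace X]

lemma integrable_bdd {f : X → ℝ} (hc : Continuous f) (C : ℝ) (hb : ∀ x, |f x| ≤ C)
    (μ : Measure X) [IsFiniteMeasure μ] : Integrable f μ := by
  refine Integrable.mono' (integrable_const C) hc.aestronglyMeasurable ?_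
  filter_upwards with x
  simpa [Real.norm_eq_abs] using hb x

lemma abs_integral_le (μ : Measure X) [IsProbabilityMeasure μ] {f : X → ℝ} {C : ℝ}
    (hb : ∀ x, |f x| ≤ C) : |∫ x, f x ∂μ| ≤ C := by
  have := norm_integral_le_of_norm_le_const (μ := μ) (f := f) (C := C)
    (by filter_upwards with x; simpa [Real.norm_eq_abs] using hb x)
  simpa [Real.norm_eq_abs, measure_univ] using this

lemma abs_integral_le_meas (μ : Measure X) [IsProbabilityMeasure μ] {f : X → ℝ} {s : Set X}
    (hs : MeasurableSet s) (hint : Integrable f μ)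
    (hb : ∀ x, |f x| ≤ s.indicator (fun _ => (1:ℝ)) x) : |∫ x, f x ∂μ| ≤ (μ s).toReal := by
  have h1 : |∫ x, f x ∂μ| ≤ ∫ x, |f x| ∂μ := by
    simpa [Real.norm_eq_abs] using norm_integral_le_integral_norm (μ := μ) f
  have h2 : ∫ x, |f x| ∂μ ≤ ∫ x, s.indicator (fun _ => (1:ℝ)) x ∂μ := by
    refine integral_mono hint.abs ((integrable_const (1:ℝ)).indicator hs) hb
  have h3 : ∫ x, s.indicator (fun _ => (1:ℝ)) x ∂μ = (μ s).toReal := by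
    rw [integral_indicator_const (1:ℝ) hs]; simp [Measure.real]
  linarith

lemma exists_ulim (U : Ultrafilter ℕ) (s : ℕ → ℝ) (a b : ℝ) (h : ∀ k, s k ∈ Set.Icc a b) :
    ∃ L, L ∈ Set.Icc a b ∧ Tendsto s ↑U (nhds L) := by
  have hle : ↑(U.map s) ≤ 𝓟 (Set.Icc a b) := by
    rw [Ultrafilter.coe_map, le_principal_iff, mem_map]
    exact univ_mem' h
  obtain ⟨L, hL, hle2⟩ := isCompact_Icc.ultrafilter_le_nhds (U.map s) hle
  refine ⟨L, hL, ?_⟩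
  rwa [Tendsto, ← Ultrafilter.coe_map]

end Part2

namespace Part3
open BLProofAux Part2

variable {X : Type*} [MetricSpace X] [MeasurableSpace X] [BorelSpace X]

lemma caseA
    (M N : ℕ → Measure X) (hM : ∀ k, IsProbabilityMeasure (M k))
    (hN : ∀ k, IsProbabilityMeasure (N k))
    (U : Ultrafilter ℕ) (hU : ↑U ≤ (atTop : Filter ℕ))
    (f : ℕ → X → ℝ) (hfb : ∀ k x, |f k x| ≤ 1) (hfl : ∀ k, lipb 1 (f k))
    (χ : X → ℝ) (hχ0 : ∀ x, 0 ≤ χ x) (hχ1 : ∀ x, χ x ≤ 1)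
    (Lχ : ℝ) (hLχ : 0 ≤ Lχ) (hχl : lipb Lχ χ)
    (S : Finset X) (hSne : S.Nonempty)
    (R : ℝ) (hR : 0 < R)
    (hsupp : ∀ x, χ x ≠ 0 → ∃ w ∈ S, dist x w ≤ R)
    (ε₁ : ℝ) (hε : 0 < ε₁) (hgap : 8 * R ≤ ε₁)
    (hA : {k | ε₁ ≤ (∫ x, f k x * χ x ∂ M k) - ∫ x, f k x * χ x ∂ N k} ∈ U)
    (hW : ∀ g : X → ℝ, UniformContinuous g → (∃ C, ∀ x, |g x| ≤ C) →
      Tendsto (fun k => (∫ x, g x ∂M k) - ∫ x, g x ∂N k) atTop (nhds 0)) : False := by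
  classical
  set ρ : ℝ := ε₁ / 16 with hρdef
  have hρ : 0 < ρ := by positivity
  -- ultralimits of values
  have hv0 : ∀ w : X, ∃ L, L ∈ Set.Icc (-1:ℝ) 1 ∧ Tendsto (fun k => f k w) ↑U (nhds L) := by
    intro w
    exact exists_ulim U _ (-1) 1 (fun k => abs_le.mp (hfb k w))
  choose v hv1 hv2 using hv0
  -- 1-Lipschitz consistency of v
  have hvc : ∀ w w' : X, |v w - v w'| ≤ dist w w' := by
    intro w w'
    have ht : Tendsto (fun k => |f k w - f k w'|) ↑U (nhds |v w - v w'|) :=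
      (Filter.Tendsto.sub (hv2 w) (hv2 w')).abs
    exact le_of_tendsto ht (Filter.Eventually.of_forall (fun k => by
      simpa [Real.dist_eq] using ((hfl k).mono le_rfl) w w'))
  -- interpolant
  set m : X → ℝ := fun x => S.inf' hSne (fun w => v w + dist x w) with hm
  have hmlip : lipb 1 m := by
    have key : ∀ x y : X, m x ≤ m y + dist x y := by
      intro x y
      obtain ⟨w₀, hw₀S, hw₀⟩ := Finset.exists_mem_eq_inf' hSne (fun w => v w + dist y w)
      have h1 : m x ≤ v w₀ + dist x w₀ := Finset.inf'_le _ hw₀S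
      have h2 : dist x w₀ ≤ dist x y + dist y w₀ := dist_triangle x y w₀
      have h3 : m y = v w₀ + dist y w₀ := hw₀
      linarith
    intro x y
    rw [abs_sub_le_iff]
    constructor
    · linarith [key x y]
    · linarith [key y x, dist_comm x y]
  set gE : X → ℝ := fun x => max (-1) (min 1 (m x)) with hgE
  have hgElip : lipb 1 gE := by
    intro x y
    calc |gE x - gE y| ≤ |min 1 (m x) - min 1 (m y)| := abs_max_sub_max (-1) _ _
      _ ≤ |m x - m y| := abs_min_sub_min 1 _ _
      _ ≤ 1 * dist x y := hmlip x y
  have hgEb : ∀ x, |gE x| ≤ 1 := by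
    intro x
    rw [abs_le]
    constructor
    · exact le_max_left _ _
    · exact max_le (by norm_num) (min_le_left _ _)
  -- the key approximation bound
  have hkey : ∀ k, (∀ w ∈ S, |f k w - v w| ≤ ρ) → ∀ x : X,
      |f k x * χ x - gE x * χ x| ≤ 2 * R + ρ := by
    intro k hk x
    by_cases hx : χ x = 0
    · rw [hx]
      simp only [mul_zero, sub_zero, abs_zero]
      positivity
    · obtain ⟨w, hwS, hwR⟩ := hsupp x hx
      -- bound on m x
      have hub : m x ≤ v w + R := by
        have := Finset.inf'_le (b := w) (fun w' => v w' + dist x w') hwS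
        linarith
      have hlb : v w - R ≤ m x := by
        refine Finset.le_inf' hSne _ (fun w' hw' => ?_)
        have h1 : |v w - v w'| ≤ dist w w' := hvc w w'
        have h2 : dist w w' ≤ dist x w + dist x w' := by
          have := dist_triangle w x w'
          have := dist_comm w x
          linarith
        have := abs_le.mp h1
        linarith
      have hfg : |f k x - gE x| ≤ 2 * R + ρ := by
        have hclamp : f k x = max (-1) (min 1 (f k x)) := by
          have := abs_le.mp (hfb k x)
          rw [min_eq_right this.2, max_eq_right this.1]
        have h1 : |f k x - gE x| ≤ |f k x - m x| := by
          conv_lhs => rw [hclamp]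
          calc |max (-1) (min 1 (f k x)) - max (-1) (min 1 (m x))|
              ≤ |min 1 (f k x) - min 1 (m x)| := abs_max_sub_max _ _ _
            _ ≤ |f k x - m x| := abs_min_sub_min _ _ _
        have h2 : |f k x - f k w| ≤ dist x w := by simpa using hfl k x w
        have h3 : |f k w - v w| ≤ ρ := hk w hwS
        have h4 : |f k x - m x| ≤ 2 * R + ρ := by
          obtain ⟨e1a, e1b⟩ := abs_le.mp h2
          obtain ⟨e2a, e2b⟩ := abs_le.mp h3
          rw [abs_le]
          constructor <;> linarith
        linarith
      have : |f k x * χ x - gE x * χ x| = |f k x - gE x| * |χ x| := by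
        rw [← abs_mul]; ring_nf
      rw [this]
      have hχax : |χ x| ≤ 1 := abs_le.mpr ⟨by linarith [hχ0 x], hχ1 x⟩
      calc |f k x - gE x| * |χ x| ≤ (2*R + ρ) * 1 :=
            mul_le_mul hfg hχax (abs_nonneg _) (by positivity)
        _ = 2*R + ρ := mul_one _
  -- the fixed test function
  set g : X → ℝ := fun x => gE x * χ x with hg
  have hglip : lipb (1 + Lχ) g := lipb.mul hgElip hχl hgEb (fun x => abs_le.mpr ⟨by linarith [hχ0 x], hχ1 x⟩)
  have hgb : ∀ x, |g x| ≤ 1 := by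
    intro x
    rw [hg, abs_mul]
    calc |gE x| * |χ x| ≤ 1 * 1 := mul_le_mul (hgEb x) (abs_le.mpr ⟨by linarith [hχ0 x], hχ1 x⟩) (abs_nonneg _) one_pos.le
      _ = 1 := mul_one 1
  have hconv := hW g hglip.uniformContinuous ⟨1, hgb⟩
  have hsmall : ∀ᶠ k in (↑U : Filter ℕ), |(∫ x, g x ∂M k) - ∫ x, g x ∂N k| < ε₁ / 4 := by
    apply hU
    have := Metric.tendsto_nhds.mp hconv (ε₁/4) (by positivity)
    simpa [Real.dist_eq] using this
  have hpigeon : ∀ᶠ k in (↑U : Filter ℕ), ∀ w ∈ S, |f k w - v w| ≤ ρ := by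
    rw [Finset.eventually_all]
    intro w hw
    have := Metric.tendsto_nhds.mp (hv2 w) ρ hρ
    filter_upwards [this] with k hk
    rw [Real.dist_eq] at hk
    exact hk.le
  have hA' : ∀ᶠ k in (↑U : Filter ℕ),
      ε₁ ≤ (∫ x, f k x * χ x ∂ M k) - ∫ x, f k x * χ x ∂ N k := hA
  obtain ⟨k, ⟨hk1, hk2⟩, hk3⟩ := ((hA'.and hsmall).and hpigeon).exists
  have hfc : Continuous (f k) := (hfl k).continuous
  have hχcont : Continuous χ := hχl.continuous
  have hχb : ∀ x, |χ x| ≤ 1 := fun x => abs_le.mpr ⟨by linarith [hχ0 x], hχ1 x⟩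
  have hbd1 : ∀ x, |f k x * χ x| ≤ 1 := by
    intro x
    rw [abs_mul]
    calc |f k x| * |χ x| ≤ 1 * 1 :=
        mul_le_mul (hfb k x) (hχb x) (abs_nonneg _) one_pos.le
      _ = 1 := mul_one 1
  have hkx := hkey k hk3
  have hd : ∀ (μ : Measure X) [IsProbabilityMeasure μ],
      |(∫ x, f k x * χ x ∂μ) - ∫ x, g x ∂μ| ≤ 2*R + ρ := by
    intro μ _
    have hint1 : Integrable (fun x => f k x * χ x) μ :=
      integrable_bdd (hfc.mul hχcont) 1 hbd1 μ
    have hint2 : Integrable g μ := integrable_bdd (hgElip.continuous.mul hχcont) 1 hgb μ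
    rw [← integral_sub hint1 hint2]
    exact abs_integral_le μ (fun x => hkx x)
  have eM := hd (M k)
  have eN := hd (N k)
  obtain ⟨eMa, eMb⟩ := abs_le.mp eM
  obtain ⟨eNa, eNb⟩ := abs_le.mp eN
  obtain ⟨h2a, h2b⟩ := abs_lt.mp hk2
  linarith [hk1, h2b, hgap]

end Part3

namespace Part4
open BLProofAux Part2

variable {X : Type*} [MetricSpace X] [MeasurableSpace X] [BorelSpace X]

lemma mem_foldr_union (l : List (Set X)) (x : X) :
    x ∈ l.foldr (· ∪ ·) ∅ ↔ ∃ A ∈ l, x ∈ A := by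
  induction l with
  | nil => simp
  | cons A t ih => simp [ih]

lemma meas_foldr_union (l : List (Set X)) (h : ∀ A ∈ l, MeasurableSet A) :
    MeasurableSet (l.foldr (· ∪ ·) ∅) := by
  induction l with
  | nil => simp
  | cons A t ih =>
    simp only [List.foldr_cons]
    exact (h A List.mem_cons_self).union (ih fun B hB => h B (List.mem_cons_of_mem _ hB))

lemma list_meas_sum (μ : Measure X) [IsFiniteMeasure μ] :
    ∀ (l : List (Set X)), l.Pairwise Disjoint → (∀ A ∈ l, MeasurableSet A) →
      (l.map (fun A => (μ A).toReal)).sum = (μ (l.foldr (· ∪ ·) ∅)).toReal := by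
  intro l
  induction l with
  | nil => simp
  | cons A t ih =>
    intro hp hm
    rw [List.pairwise_cons] at hp
    simp only [List.map_cons, List.sum_cons, List.foldr_cons]
    rw [ih hp.2 (fun B hB => hm B (List.mem_cons_of_mem _ hB))]
    have hdisj : Disjoint A (t.foldr (· ∪ ·) ∅) := by
      rw [Set.disjoint_left]
      intro x hxA hxU
      obtain ⟨B, hBt, hxB⟩ := (mem_foldr_union t x).mp hxU
      exact (Set.disjoint_left.mp (hp.1 B hBt)) hxA hxB
    have hmeasU : MeasurableSet (t.foldr (· ∪ ·) ∅) :=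
      meas_foldr_union t (fun B hB => hm B (List.mem_cons_of_mem _ hB))
    rw [measure_union hdisj hmeasU,
      ENNReal.toReal_add (measure_ne_top μ A) (measure_ne_top μ _)]

lemma list_sum_tendsto {α : Type*} (F : Filter ℕ) (g : α → ℕ → ℝ) (Lf : α → ℝ) :
    ∀ (l : List α), (∀ a ∈ l, Tendsto (g a) F (nhds (Lf a))) →
      Tendsto (fun k => (l.map (fun a => g a k)).sum) F (nhds ((l.map Lf).sum)) := by
  intro l
  induction l with
  | nil => simp [tendsto_const_nhds]
  | cons a t ih =>
    intro h
    simp only [List.map_cons, List.sum_cons]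
    exact (h a List.mem_cons_self).add
      (ih fun b hb => h b (List.mem_cons_of_mem _ hb))

lemma list_sum_map_add {α : Type*} (a b : α → ℝ) :
    ∀ (l : List α), (l.map (fun p => a p + b p)).sum = (l.map a).sum + (l.map b).sum := by
  intro l
  induction l with
  | nil => simp
  | cons p t ih => simp [ih]; ring

/-- greedy disjointification of a covered set along a list of centers -/
lemma disjointify (c : ℝ) :
    ∀ (l : List X) (S0 : Set X), MeasurableSet S0 →
    (∀ y ∈ S0, ∃ x ∈ l, dist y x ≤ c) →
    ∃ Vl : List (Set X × X),
      (∀ p ∈ Vl, MeasurableSet p.1 ∧ p.1 ⊆ closedBall p.2 c ∧ p.1 ⊆ S0 ∧ p.2 ∈ l) ∧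
      Vl.Pairwise (fun p q => Disjoint p.1 q.1) ∧
      ((Vl.map Prod.fst).foldr (· ∪ ·) ∅ = S0) := by
  intro l
  induction l with
  | nil =>
    intro S0 _ hcov
    refine ⟨[], by simp, List.Pairwise.nil, ?_⟩
    simp only [List.map_nil, List.foldr_nil]
    symm
    rw [Set.eq_empty_iff_forall_notMem]
    intro y hy
    obtain ⟨x, hx, _⟩ := hcov y hy
    exact List.not_mem_nil hx
  | cons x t ih =>
    intro S0 hS0 hcov
    set V : Set X := {y ∈ S0 | dist y x ≤ c} with hV
    have hVmeas : MeasurableSet V := by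
      have : V = S0 ∩ (fun y => dist y x) ⁻¹' (Set.Iic c) := by
        ext y
        constructor
        · intro hy; exact ⟨hy.1, hy.2⟩
        · intro hy; exact ⟨hy.1, hy.2⟩
      rw [this]
      exact hS0.inter ((continuous_id.dist continuous_const).measurable measurableSet_Iic)
    obtain ⟨Vl, hVl1, hVl2, hVl3⟩ := ih (S0 \ V) (hS0.diff hVmeas) (by
      intro y hy
      obtain ⟨z, hz, hdz⟩ := hcov y hy.1
      rcases List.mem_cons.mp hz with rfl | hzt
      · exact absurd ⟨hy.1, hdz⟩ hy.2
      · exact ⟨z, hzt, hdz⟩)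
    refine ⟨(V, x) :: Vl, ?_, ?_, ?_⟩
    · intro p hp
      rcases List.mem_cons.mp hp with rfl | hpt
      · exact ⟨hVmeas, fun y hy => by simpa [Metric.mem_closedBall] using hy.2,
          fun y hy => hy.1, List.mem_cons_self⟩
      · obtain ⟨h1, h2, h3, h4⟩ := hVl1 p hpt
        exact ⟨h1, h2, fun y hy => (h3 hy).1, List.mem_cons_of_mem _ h4⟩
    · rw [List.pairwise_cons]
      refine ⟨fun q hq => ?_, hVl2⟩
      obtain ⟨_, _, h3, _⟩ := hVl1 q hq
      rw [Set.disjoint_left]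
      intro z hzV hzq
      exact (h3 hzq).2 hzV
    · simp only [List.map_cons, List.foldr_cons, hVl3]
      exact Set.union_diff_cancel (fun y hy => hy.1)

end Part4

namespace Part5
open BLProofAux Part2 Part3 Part4

variable {X : Type*} [MetricSpace X] [MeasurableSpace X] [BorelSpace X]

lemma main
    (M N : ℕ → Measure X) (hM : ∀ k, IsProbabilityMeasure (M k))
    (hN : ∀ k, IsProbabilityMeasure (N k))
    (ht : ∀ (k : ℕ) (δ' : ℝ), 0 < δ' → ∃ K : Set X, IsCompact K ∧
      ((M k) Kᶜ).toReal ≤ δ' ∧ ((N k) Kᶜ).toReal ≤ δ')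
    (ε₀ : ℝ) (hε : 0 < ε₀) (hε1 : ε₀ ≤ 1)
    (hwit : ∀ k, ∃ f : X → ℝ, (∀ x, |f x| ≤ 1) ∧ lipb 1 f ∧
      ε₀ ≤ (∫ x, f x ∂M k) - ∫ x, f x ∂N k)
    (hW : ∀ g : X → ℝ, UniformContinuous g → (∃ C, ∀ x, |g x| ≤ C) →
      Tendsto (fun k => (∫ x, g x ∂M k) - ∫ x, g x ∂N k) atTop (nhds 0)) : False := by
  classical
  -- X is nonempty
  have hXne : Nonempty X := by
    by_contra h
    rw [not_nonempty_iff] at h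
    have h1 : (M 0) Set.univ = 1 := (hM 0).measure_univ
    rw [Set.univ_eq_empty_iff.mpr h, measure_empty] at h1
    exact zero_ne_one h1
  obtain ⟨x₀⟩ := hXne
  set δ : ℝ := ε₀ / 4000 with hδdef
  have hδ : 0 < δ := by positivity
  have hδ1 : δ < 1 := by rw [hδdef]; linarith
  set Rc : ℝ := 100 * δ with hRcdef
  have hRc : 0 < Rc := by positivity
  -- witnesses
  choose f hfb hfl hfint using hwit
  have hfc : ∀ k, Continuous (f k) := fun k => (hfl k).continuous
  -- compact sets
  choose Kc hKcomp hKM hKN using (fun k => ht k δ hδ)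
  have hKne : ∀ k, (Kc k).Nonempty := by
    intro k
    rw [Set.nonempty_iff_ne_empty]
    intro hemp
    have : ((M k) (Kc k)ᶜ).toReal = 1 := by
      rw [hemp, Set.compl_empty, measure_univ]; simp
    have h2 := hKM k
    rw [this] at h2
    linarith
  -- the ultrafilter
  set U : Ultrafilter ℕ := Filter.hyperfilter ℕ with hUdef
  have hU : (↑U : Filter ℕ) ≤ (atTop : Filter ℕ) := Nat.hyperfilter_le_atTop
  -- real-valued total measure
  set Θ : ℕ → Set X → ℝ := fun k A => ((M k) A).toReal + ((N k) A).toReal with hΘdef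
  have hΘapp : ∀ k (A : Set X), Θ k A = ((M k) A).toReal + ((N k) A).toReal :=
    fun k A => by rw [hΘdef]
  have hMreal : ∀ k (A : Set X), ((M k) A).toReal ≤ 1 := by
    intro k A
    have h1 : (M k) A ≤ 1 := prob_le_one
    calc ((M k) A).toReal ≤ (1 : ℝ≥0∞).toReal := ENNReal.toReal_mono (by simp) h1
      _ = 1 := by simp
  have hNreal : ∀ k (A : Set X), ((N k) A).toReal ≤ 1 := by
    intro k A
    have h1 : (N k) A ≤ 1 := prob_le_one
    calc ((N k) A).toReal ≤ (1 : ℝ≥0∞).toReal := ENNReal.toReal_mono (by simp) h1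
      _ = 1 := by simp
  have hΘbd : ∀ k (A : Set X), Θ k A ∈ Set.Icc (0:ℝ) 2 := by
    intro k A
    constructor
    · positivity
    · have := hMreal k A; have := hNreal k A; simp only [hΘdef]; linarith
  have hΘmono : ∀ k {A B : Set X}, A ⊆ B → Θ k A ≤ Θ k B := by
    intro k A B hAB
    have h1 : ((M k) A).toReal ≤ ((M k) B).toReal :=
      ENNReal.toReal_mono (measure_ne_top _ _) (measure_mono hAB)
    have h2 : ((N k) A).toReal ≤ ((N k) B).toReal :=
      ENNReal.toReal_mono (measure_ne_top _ _) (measure_mono hAB)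
    simp only [hΘdef]; linarith
  -- ultralimits of measures of sets
  have hlim0 : ∀ A : Set X, ∃ L, L ∈ Set.Icc (0:ℝ) 2 ∧
      Tendsto (fun k => Θ k A) ↑U (nhds L) :=
    fun A => exists_ulim U _ 0 2 (fun k => hΘbd k A)
  choose limTh hlimIcc hlimT using hlim0
  -- admissible families
  set Adm : List (Set X × X) → Prop := fun l =>
    l.Pairwise (fun p q => Disjoint p.1 q.1) ∧
    ∀ p ∈ l, MeasurableSet p.1 ∧ p.1 ⊆ closedBall p.2 (33*δ) with hAdmdef
  set sumL : List (Set X × X) → ℝ := fun l => (l.map (fun p => limTh p.1)).sum with hsumLdef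
  have hsum_le2 : ∀ l, Adm l → sumL l ≤ 2 := by
    intro l hl
    obtain ⟨hp, hmb⟩ := hl
    have hpf : (l.map Prod.fst).Pairwise Disjoint :=
      List.Pairwise.map _ (fun _ _ h => h) hp
    have hmf : ∀ A ∈ l.map Prod.fst, MeasurableSet A := by
      intro A hA
      obtain ⟨p, hp1, rfl⟩ := List.mem_map.mp hA
      exact (hmb p hp1).1
    have hev : ∀ k, (l.map (fun p => Θ k p.1)).sum ≤ 2 := by
      intro k
      have hsplit := list_sum_map_add (fun p : Set X × X => ((M k) p.1).toReal)
        (fun p => ((N k) p.1).toReal) l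
      have e1 := list_meas_sum (M k) (l.map Prod.fst) hpf hmf
      have e2 := list_meas_sum (N k) (l.map Prod.fst) hpf hmf
      rw [List.map_map] at e1 e2
      have hcomp1 : ((fun A => ((M k) A).toReal) ∘ Prod.fst)
          = fun p : Set X × X => ((M k) p.1).toReal := rfl
      have hcomp2 : ((fun A => ((N k) A).toReal) ∘ Prod.fst)
          = fun p : Set X × X => ((N k) p.1).toReal := rfl
      rw [hcomp1] at e1
      rw [hcomp2] at e2
      have hθeq : (fun p : Set X × X => Θ k p.1)
          = fun p => ((M k) p.1).toReal + ((N k) p.1).toReal := by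
        funext p
        rw [hΘapp]
      rw [hθeq, hsplit, e1, e2]
      have := hMreal k ((l.map Prod.fst).foldr (· ∪ ·) ∅)
      have := hNreal k ((l.map Prod.fst).foldr (· ∪ ·) ∅)
      linarith
    have htd := list_sum_tendsto (↑U) (fun p k => Θ k p.1) (fun p => limTh p.1) l
      (fun p _ => hlimT p.1)
    exact le_of_tendsto htd (Filter.Eventually.of_forall hev)
  set P : ℝ := sSup {z : ℝ | ∃ l, Adm l ∧ z = sumL l} with hPdef
  have hPne : ∃ z, z ∈ {z : ℝ | ∃ l, Adm l ∧ z = sumL l} := by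
    refine ⟨0, [], ⟨List.Pairwise.nil, by simp⟩, by simp [hsumLdef]⟩
  have hPbdd : BddAbove {z : ℝ | ∃ l, Adm l ∧ z = sumL l} := by
    refine ⟨2, fun z hz => ?_⟩
    obtain ⟨l, hl, rfl⟩ := hz
    exact hsum_le2 l hl
  obtain ⟨zstar, hzstarmem, hzstar⟩ := exists_lt_of_lt_csSup hPne
    (show P - δ < P by linarith)
  obtain ⟨lstar, hlstarAdm, rfl⟩ := hzstarmem
  -- the budget estimate
  have hbudget : ∀ l2, Adm (lstar ++ l2) → sumL l2 ≤ δ := by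
    intro l2 h2
    have h3 : sumL (lstar ++ l2) ≤ P := le_csSup hPbdd ⟨_, h2, rfl⟩
    have h4 : sumL (lstar ++ l2) = sumL lstar + sumL l2 := by
      simp [hsumLdef, List.map_append, List.sum_append]
    linarith
  -- the core anchor set
  set Sstar : Finset X := (lstar.map Prod.snd).toFinset ∪ {x₀} with hSstardef
  have hSne : Sstar.Nonempty := ⟨x₀, by simp [hSstardef]⟩
  have hanchor : ∀ p ∈ lstar, p.2 ∈ Sstar := by
    intro p hp
    simp only [hSstardef, Finset.mem_union, List.mem_toFinset, List.mem_map]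
    exact Or.inl ⟨p, hp, rfl⟩
  have hSstarNE : (↑Sstar : Set X).Nonempty := ⟨x₀, by
    simp [hSstardef]⟩
  -- THE FAR LEMMA
  have far : ∀ G : Set X, G.Nonempty → IsCompact G →
      (∀ x ∈ G, 67*δ ≤ infDist x (↑Sstar : Set X)) →
      ∀ᶠ k in (↑U : Filter ℕ), Θ k {y | infDist y G < δ} < 2*δ := by
    intro G hGne hGc hGfar
    have hcover : G ⊆ ⋃ x ∈ G, ball x (32*δ) :=
      fun x hx => Set.mem_biUnion hx (mem_ball_self (by positivity))
    obtain ⟨t, htG, htfin, htcover⟩ :=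
      hGc.elim_finite_subcover_image (fun x _ => isOpen_ball) hcover
    set NrG : Set X := {y | infDist y G < δ} with hNrGdef
    have hNmeas : MeasurableSet NrG := by
      have hop : IsOpen NrG := by
        have he : NrG = (fun y => infDist y G) ⁻¹' (Set.Iio δ) := rfl
        rw [he]
        exact (continuous_infDist_pt G).isOpen_preimage _ isOpen_Iio
      exact hop.measurableSet
    have hcov : ∀ y ∈ NrG, ∃ x ∈ htfin.toFinset.toList, dist y x ≤ 33*δ := by
      intro y hy
      obtain ⟨z, hzG, hdz⟩ := (infDist_lt_iff hGne).mp hy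
      have hz2 : z ∈ ⋃ x ∈ t, ball x (32*δ) := htcover hzG
      simp only [Set.mem_iUnion, exists_prop] at hz2
      obtain ⟨x, hxt, hzx⟩ := hz2
      refine ⟨x, ?_, ?_⟩
      · rw [Finset.mem_toList, Set.Finite.mem_toFinset]
        exact hxt
      · rw [mem_ball] at hzx
        have := dist_triangle y z x
        linarith
    obtain ⟨Vl, hVl1, hVl2, hVl3⟩ := disjointify (33*δ) htfin.toFinset.toList NrG hNmeas hcov
    have hVadm : Adm (lstar ++ Vl) := by
      constructor
      · rw [List.pairwise_append]
        refine ⟨hlstarAdm.1, hVl2, ?_⟩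
        intro p hp q hq
        obtain ⟨hqm, hqball, hqsub, hqmem⟩ := hVl1 q hq
        have hq2G : q.2 ∈ G := by
          rw [Finset.mem_toList, Set.Finite.mem_toFinset] at hqmem
          exact htG hqmem
        have hfar2 : 67*δ ≤ infDist q.2 (↑Sstar : Set X) := hGfar q.2 hq2G
        have hpS : (p.2 : X) ∈ (↑Sstar : Set X) := by
          exact_mod_cast hanchor p hp
        have hdist : 67*δ ≤ dist q.2 p.2 :=
          le_trans hfar2 (infDist_le_dist_of_mem hpS)
        rw [Set.disjoint_left]
        intro z hzp hzq
        have h1 : dist z p.2 ≤ 33*δ := by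
          have := (hlstarAdm.2 p hp).2 hzp
          rwa [Metric.mem_closedBall] at this
        have h2 : dist z q.2 ≤ 33*δ := by
          have := hqball hzq
          rwa [Metric.mem_closedBall] at this
        have h3 := dist_triangle q.2 z p.2
        have h4 : dist q.2 z = dist z q.2 := dist_comm _ _
        linarith
      · intro p hp
        rcases List.mem_append.mp hp with h | h
        · exact hlstarAdm.2 p h
        · obtain ⟨h1, h2, _, _⟩ := hVl1 p h
          exact ⟨h1, h2⟩
    have hVbudget : sumL Vl ≤ δ := hbudget Vl hVadm
    have hpf : (Vl.map Prod.fst).Pairwise Disjoint :=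
      List.Pairwise.map _ (fun _ _ h => h) hVl2
    have hmf : ∀ A ∈ Vl.map Prod.fst, MeasurableSet A := by
      intro A hA
      obtain ⟨p, hp1, rfl⟩ := List.mem_map.mp hA
      exact (hVl1 p hp1).1
    have hid : ∀ k, Θ k NrG = (Vl.map (fun p => Θ k p.1)).sum := by
      intro k
      have e1 := list_meas_sum (M k) (Vl.map Prod.fst) hpf hmf
      have e2 := list_meas_sum (N k) (Vl.map Prod.fst) hpf hmf
      rw [hVl3, List.map_map] at e1 e2
      have hcomp1 : ((fun A => ((M k) A).toReal) ∘ Prod.fst)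
          = fun p : Set X × X => ((M k) p.1).toReal := rfl
      have hcomp2 : ((fun A => ((N k) A).toReal) ∘ Prod.fst)
          = fun p : Set X × X => ((N k) p.1).toReal := rfl
      rw [hcomp1] at e1
      rw [hcomp2] at e2
      have hsplit := list_sum_map_add (fun p : Set X × X => ((M k) p.1).toReal)
        (fun p => ((N k) p.1).toReal) Vl
      have hθeq : (fun p : Set X × X => Θ k p.1)
          = fun p => ((M k) p.1).toReal + ((N k) p.1).toReal := by
        funext p
        rw [hΘapp]
      rw [hΘapp, hθeq, hsplit, e1, e2]
    have htend : Tendsto (fun k => Θ k NrG) ↑U (nhds (sumL Vl)) := by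
      have htd := list_sum_tendsto (↑U) (fun p k => Θ k p.1) (fun p => limTh p.1) Vl
        (fun p _ => hlimT p.1)
      exact Tendsto.congr (fun k => (hid k).symm) htd
    exact htend.eventually_lt_const (by linarith)
  -- the core cutoff
  set χ : X → ℝ := fun x => max 0 (min 1 (2 - (1/Rc) * infDist x (↑Sstar : Set X))) with hχdef
  have hχ0 : ∀ x, 0 ≤ χ x := fun x => le_max_left _ _
  have hχ1 : ∀ x, χ x ≤ 1 := fun x => max_le (by norm_num) (min_le_left _ _)
  have hχlip : lipb (1/Rc) χ := by
    have hbase : lipb (1/Rc) (fun x => 2 - (1/Rc) * infDist x (↑Sstar : Set X)) := by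
      intro x y
      have h := lipb_infDist (X := X) (↑Sstar : Set X) x y
      have he : (2 - (1/Rc) * infDist x (↑Sstar : Set X)) -
          (2 - (1/Rc) * infDist y (↑Sstar : Set X)) =
          -((1/Rc) * (infDist x (↑Sstar : Set X) - infDist y (↑Sstar : Set X))) := by ring
      rw [he, abs_neg, abs_mul, abs_of_pos (show (0:ℝ) < 1/Rc by positivity)]
      calc (1/Rc) * |infDist x (↑Sstar : Set X) - infDist y (↑Sstar : Set X)|
          ≤ (1/Rc) * (1 * dist x y) := mul_le_mul_of_nonneg_left h (by positivity)
        _ = (1/Rc) * dist x y := by ring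
    exact hbase.comp_max_min 0 1
  have hχsupp : ∀ x, χ x ≠ 0 → ∃ w ∈ Sstar, dist x w ≤ 2*Rc := by
    intro x hx
    have h1 : 0 < 2 - (1/Rc) * infDist x (↑Sstar : Set X) := by
      by_contra h
      push_neg at h
      have : min 1 (2 - (1/Rc) * infDist x (↑Sstar : Set X)) ≤ 0 := le_trans (min_le_right _ _) h
      exact hx (by simp only [hχdef]; exact max_eq_left this)
    have h2 : infDist x (↑Sstar : Set X) < 2*Rc := by
      by_contra h
      push_neg at h
      have : (1/Rc) * (2*Rc) ≤ (1/Rc) * infDist x (↑Sstar : Set X) :=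
        mul_le_mul_of_nonneg_left h (by positivity)
      have he : (1/Rc) * (2*Rc) = 2 := by field_simp
      linarith
    obtain ⟨w, hw, hdw⟩ := (infDist_lt_iff hSstarNE).mp h2
    exact ⟨w, hw, hdw.le⟩
  have hχeq1 : ∀ x, infDist x (↑Sstar : Set X) ≤ Rc → χ x = 1 := by
    intro x hx
    have h1 : (1:ℝ) ≤ 2 - (1/Rc) * infDist x (↑Sstar : Set X) := by
      have : (1/Rc) * infDist x (↑Sstar : Set X) ≤ (1/Rc) * Rc :=
        mul_le_mul_of_nonneg_left hx (by positivity)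
      have he : (1/Rc) * Rc = 1 := by field_simp
      linarith
    simp only [hχdef]
    rw [min_eq_left h1]
    exact max_eq_right (by norm_num)
  have h1χ : ∀ x, (1 : ℝ) - χ x ≠ 0 → Rc < infDist x (↑Sstar : Set X) := by
    intro x hx
    by_contra h
    push_neg at h
    exact hx (by rw [hχeq1 x h]; ring)
  -- case split
  set 𝒜 : Set ℕ := {k | ε₀/2 ≤ (∫ x, f k x * χ x ∂ M k) - ∫ x, f k x * χ x ∂ N k} with h𝒜def
  rcases Ultrafilter.mem_or_compl_mem U 𝒜 with hA | hB
  · exact caseA M N hM hN U hU f hfb hfl χ hχ0 hχ1 (1/Rc) (by positivity) hχlip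
      Sstar hSne (2*Rc) (by positivity) hχsupp (ε₀/2) (by positivity)
      (by rw [hRcdef, hδdef]; linarith) hA hW
  · -- CASE B
    have hA_not : ∀ k, k ∈ 𝒜ᶜ →
        ¬ (ε₀/2 ≤ (∫ x, f k x * χ x ∂ M k) - ∫ x, f k x * χ x ∂ N k) := by
      intro k hk
      simpa [h𝒜def] using hk
    set b : ℕ → X → ℝ := fun k x => f k x * (1 - χ x) with hbdef
    have h1χb : ∀ x, |1 - χ x| ≤ 1 :=
      fun x => abs_le.mpr ⟨by linarith [hχ1 x], by linarith [hχ0 x]⟩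
    have h1χlip : lipb (1/Rc) (fun x => 1 - χ x) := hχlip.sub_const 1
    have hblip : ∀ k, lipb (1 + 1/Rc) (b k) := by
      intro k
      have := lipb.mul (hfl k) h1χlip (hfb k) h1χb
      exact this
    have hbb : ∀ k x, |b k x| ≤ 1 := by
      intro k x
      have : |b k x| = |f k x| * |1 - χ x| := by rw [hbdef, abs_mul]
      rw [this]
      calc |f k x| * |1 - χ x| ≤ 1 * 1 :=
          mul_le_mul (hfb k x) (h1χb x) (abs_nonneg _) one_pos.le
        _ = 1 := mul_one 1
    have hbcont : ∀ k, Continuous (b k) := fun k => (hblip k).continuous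
    have hfχb : ∀ k x, |f k x * χ x| ≤ 1 := by
      intro k x
      rw [abs_mul]
      calc |f k x| * |χ x| ≤ 1 * 1 :=
          mul_le_mul (hfb k x) (abs_le.mpr ⟨by linarith [hχ0 x], hχ1 x⟩) (abs_nonneg _) one_pos.le
        _ = 1 := mul_one 1
    have hbint : ∀ k, k ∈ 𝒜ᶜ → ε₀/2 ≤ (∫ x, b k x ∂M k) - ∫ x, b k x ∂N k := by
      intro k hk
      have hsplit : ∀ (μ : Measure X), IsProbabilityMeasure μ →
          (∫ x, f k x ∂μ) = (∫ x, f k x * χ x ∂μ) + ∫ x, b k x ∂μ := by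
        intro μ hμ
        rw [← integral_add (integrable_bdd (f := fun x => f k x * χ x) ((hfc k).mul hχlip.continuous) 1 (hfχb k) μ)
             (integrable_bdd (hbcont k) 1 (hbb k) μ)]
        congr 1
        funext x
        rw [hbdef]
        ring
      have h1 := hfint k
      rw [hsplit (M k) (hM k), hsplit (N k) (hN k)] at h1
      have h2 := hA_not k hk
      push_neg at h2
      linarith
    -- the compact-localizing cutoffs
    set φf : ℕ → X → ℝ := fun k x => max 0 (min 1 (1 - (8/δ) * infDist x (Kc k))) with hφdef
    have hφ0 : ∀ k x, 0 ≤ φf k x := fun k x => le_max_left _ _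
    have hφ1 : ∀ k x, φf k x ≤ 1 := fun k x => max_le (by norm_num) (min_le_left _ _)
    have hφlip : ∀ k, lipb (8/δ) (φf k) := by
      intro k
      have hbase : lipb (8/δ) (fun x => 1 - (8/δ) * infDist x (Kc k)) := by
        intro x y
        have h := lipb_infDist (X := X) (Kc k) x y
        have he : (1 - (8/δ) * infDist x (Kc k)) - (1 - (8/δ) * infDist y (Kc k)) =
            -((8/δ) * (infDist x (Kc k) - infDist y (Kc k))) := by ring
        rw [he, abs_neg, abs_mul, abs_of_pos (show (0:ℝ) < 8/δ by positivity)]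
        calc (8/δ) * |infDist x (Kc k) - infDist y (Kc k)|
            ≤ (8/δ) * (1 * dist x y) := mul_le_mul_of_nonneg_left h (by positivity)
          _ = (8/δ) * dist x y := by ring
      exact hbase.comp_max_min 0 1
    have hφcont : ∀ k, Continuous (φf k) := fun k => (hφlip k).continuous
    have hφmem : ∀ k x, x ∈ Kc k → φf k x = 1 := by
      intro k x hx
      have h0 : infDist x (Kc k) = 0 := infDist_zero_of_mem hx
      simp only [hφdef, h0, mul_zero, sub_zero, min_self]
      exact max_eq_right (by norm_num)
    have hφsupp : ∀ k x, φf k x ≠ 0 → infDist x (Kc k) < δ/8 := by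
      intro k x hx
      by_contra h
      push_neg at h
      apply hx
      have h2 : (8/δ) * (δ/8) ≤ (8/δ) * infDist x (Kc k) :=
        mul_le_mul_of_nonneg_left h (by positivity)
      have he : (8/δ) * (δ/8) = 1 := by field_simp
      have h3 : 1 - (8/δ) * infDist x (Kc k) ≤ 0 := by linarith
      simp only [hφdef]
      exact max_eq_left (le_trans (min_le_right _ _) h3)
    -- the exclusion cutoffs
    set ξf : Set X → X → ℝ := fun G x => max 0 (min 1 ((4/δ) * infDist x G - 1)) with hξdef
    have hξ0 : ∀ G x, 0 ≤ ξf G x := fun G x => le_max_left _ _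
    have hξ1 : ∀ G x, ξf G x ≤ 1 := fun G x => max_le (by norm_num) (min_le_left _ _)
    have hξlip : ∀ G, lipb (4/δ) (ξf G) := by
      intro G
      have hbase : lipb (4/δ) (fun x => (4/δ) * infDist x G - 1) := by
        intro x y
        have h := lipb_infDist (X := X) G x y
        have he : ((4/δ) * infDist x G - 1) - ((4/δ) * infDist y G - 1) =
            (4/δ) * (infDist x G - infDist y G) := by ring
        rw [he, abs_mul, abs_of_pos (show (0:ℝ) < 4/δ by positivity)]
        calc (4/δ) * |infDist x G - infDist y G|
            ≤ (4/δ) * (1 * dist x y) := mul_le_mul_of_nonneg_left h (by positivity)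
          _ = (4/δ) * dist x y := by ring
      exact hbase.comp_max_min 0 1
    have hξcont : ∀ G, Continuous (ξf G) := fun G => (hξlip G).continuous
    have hξeq1 : ∀ (G : Set X) x, δ/2 ≤ infDist x G → ξf G x = 1 := by
      intro G x hx
      have h2 : (4/δ) * (δ/2) ≤ (4/δ) * infDist x G :=
        mul_le_mul_of_nonneg_left hx (by positivity)
      have he : (4/δ) * (δ/2) = 2 := by field_simp; ring
      have h3 : (1:ℝ) ≤ (4/δ) * infDist x G - 1 := by linarith
      simp only [hξdef]
      rw [min_eq_left h3]
      exact max_eq_right (by norm_num)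
    have hξsupp : ∀ (G : Set X) x, ξf G x ≠ 0 → δ/4 < infDist x G := by
      intro G x hx
      by_contra h
      push_neg at h
      apply hx
      have h2 : (4/δ) * infDist x G ≤ (4/δ) * (δ/4) :=
        mul_le_mul_of_nonneg_left h (by positivity)
      have he : (4/δ) * (δ/4) = 1 := by field_simp
      have h3 : (4/δ) * infDist x G - 1 ≤ 0 := by linarith
      simp only [hξdef]
      exact max_eq_left (le_trans (min_le_right _ _) h3)
    -- the free compact cores
    set Ffun : ℕ → Set X := fun k => Kc k ∩ {x | Rc - δ/8 ≤ infDist x (↑Sstar : Set X)} with hFdef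
    have hFcomp : ∀ k, IsCompact (Ffun k) := by
      intro k
      refine (hKcomp k).inter_right ?_
      have he : {x | Rc - δ/8 ≤ infDist x (↑Sstar : Set X)} =
          (fun x => infDist x (↑Sstar : Set X)) ⁻¹' Set.Ici (Rc - δ/8) := rfl
      rw [he]
      exact isClosed_Ici.preimage (continuous_infDist_pt _)
    have hFfar : ∀ k, ∀ x ∈ Ffun k, 67*δ ≤ infDist x (↑Sstar : Set X) := by
      intro k x hx
      have := hx.2
      simp only [Set.mem_setOf_eq] at this
      rw [hRcdef] at this
      linarith
    -- nonemptiness of the free cores on the B-set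
    have hbφ : ∀ k, k ∈ 𝒜ᶜ → ε₀/2 - 2*δ ≤
        (∫ x, b k x * φf k x ∂M k) - ∫ x, b k x * φf k x ∂N k := by
      intro k hk
      have hKmeas : MeasurableSet ((Kc k)ᶜ) := (hKcomp k).isClosed.measurableSet.compl
      have hbφb : ∀ x, |b k x * φf k x| ≤ 1 := by
        intro x
        rw [abs_mul]
        calc |b k x| * |φf k x| ≤ 1 * 1 :=
            mul_le_mul (hbb k x) (abs_le.mpr ⟨by linarith [hφ0 k x], hφ1 k x⟩)
              (abs_nonneg _) one_pos.le
          _ = 1 := mul_one 1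
      have hintb : ∀ (μ : Measure X) [IsProbabilityMeasure μ], Integrable (b k) μ :=
        fun μ _ => integrable_bdd (hbcont k) 1 (hbb k) μ
      have hintbφ : ∀ (μ : Measure X) [IsProbabilityMeasure μ],
          Integrable (fun x => b k x * φf k x) μ :=
        fun μ _ => integrable_bdd ((hbcont k).mul (hφcont k)) 1 hbφb μ
      have hpt : ∀ x, |b k x - b k x * φf k x| ≤
          Set.indicator ((Kc k)ᶜ) (fun _ => (1:ℝ)) x := by
        intro x
        by_cases hx : x ∈ Kc k
        · rw [hφmem k x hx, mul_one, sub_self, abs_zero]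
          exact Set.indicator_nonneg (fun _ _ => by norm_num) x
        · rw [Set.indicator_of_mem (by simpa using hx)]
          have he : b k x - b k x * φf k x = b k x * (1 - φf k x) := by ring
          rw [he, abs_mul]
          calc |b k x| * |1 - φf k x| ≤ 1 * 1 :=
              mul_le_mul (hbb k x) (abs_le.mpr ⟨by linarith [hφ1 k x], by linarith [hφ0 k x]⟩)
                (abs_nonneg _) one_pos.le
            _ = 1 := mul_one 1
      have hdM : |∫ x, (b k x - b k x * φf k x) ∂M k| ≤ ((M k) ((Kc k)ᶜ)).toReal :=
        abs_integral_le_meas (M k) hKmeas ((hintb (M k)).sub (hintbφ (M k))) hpt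
      have hdN : |∫ x, (b k x - b k x * φf k x) ∂N k| ≤ ((N k) ((Kc k)ᶜ)).toReal :=
        abs_integral_le_meas (N k) hKmeas ((hintb (N k)).sub (hintbφ (N k))) hpt
      have heM : ∫ x, (b k x - b k x * φf k x) ∂M k =
          (∫ x, b k x ∂M k) - ∫ x, b k x * φf k x ∂M k :=
        integral_sub (hintb (M k)) (hintbφ (M k))
      have heN : ∫ x, (b k x - b k x * φf k x) ∂N k =
          (∫ x, b k x ∂N k) - ∫ x, b k x * φf k x ∂N k :=
        integral_sub (hintb (N k)) (hintbφ (N k))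
      rw [heM] at hdM
      rw [heN] at hdN
      obtain ⟨hdM1, hdM2⟩ := abs_le.mp hdM
      obtain ⟨hdN1, hdN2⟩ := abs_le.mp hdN
      have h1 := hbint k hk
      have h2 := hKM k
      have h3 := hKN k
      linarith
    have hFne : ∀ k, k ∈ 𝒜ᶜ → (Ffun k).Nonempty := by
      intro k hk
      by_contra hemp
      rw [Set.not_nonempty_iff_eq_empty] at hemp
      have hzero : ∀ x, b k x * φf k x = 0 := by
        intro x
        by_contra hx
        obtain ⟨hb0, hφ0'⟩ := mul_ne_zero_iff.mp hx
        have hχne : (1:ℝ) - χ x ≠ 0 := by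
          intro h
          apply hb0
          rw [hbdef]
          simp only
          rw [h, mul_zero]
        have h1 : Rc < infDist x (↑Sstar : Set X) := h1χ x hχne
        have h2 : infDist x (Kc k) < δ/8 := hφsupp k x hφ0'
        obtain ⟨y, hyK, hdy⟩ := (infDist_lt_iff (hKne k)).mp h2
        have h3 : infDist x (↑Sstar : Set X) ≤ infDist y (↑Sstar : Set X) + dist x y :=
          infDist_le_infDist_add_dist
        have hy2 : y ∈ Ffun k := ⟨hyK, by simp only [Set.mem_setOf_eq]; linarith⟩
        rw [hemp] at hy2
        exact hy2
      have hzM : (∫ x, b k x * φf k x ∂M k) = 0 := by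
        have he : (fun x => b k x * φf k x) = fun _ => (0:ℝ) := funext hzero
        rw [he, integral_zero]
      have hzN : (∫ x, b k x * φf k x ∂N k) = 0 := by
        have he : (fun x => b k x * φf k x) = fun _ => (0:ℝ) := funext hzero
        rw [he, integral_zero]
      have := hbφ k hk
      rw [hzM, hzN] at this
      rw [hδdef] at this
      linarith
    -- the recursive extraction
    set Inv : ℕ × Set X → Prop := fun p => IsCompact p.2 ∧ p.2.Nonempty ∧
      ∀ x ∈ p.2, 67*δ ≤ infDist x (↑Sstar : Set X) with hInvdef
    set Rel : ℕ × Set X → ℕ × Set X → Prop := fun p q =>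
      p.1 < q.1 ∧ q.2 = p.2 ∪ Ffun q.1 ∧ q.1 ∈ 𝒜ᶜ ∧
        Θ q.1 {y | infDist y p.2 < δ} < 2*δ with hReldef
    have hstep : ∀ s : {p : ℕ × Set X // Inv p}, ∃ t : {p : ℕ × Set X // Inv p},
        Rel s.1 t.1 := by
      rintro ⟨⟨k0, G⟩, hGc, hGne, hGfar⟩
      have hev : {k | Θ k {y | infDist y G < δ} < 2*δ} ∈ (↑U : Filter ℕ) :=
        far G hGne hGc hGfar
      have htail : {k | k0 < k} ∈ (↑U : Filter ℕ) := hU (eventually_gt_atTop k0)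
      obtain ⟨k, hk1, hk2, hk3⟩ := Filter.nonempty_of_mem (inter_mem hB (inter_mem hev htail))
      refine ⟨⟨(k, G ∪ Ffun k), ?_, ?_, ?_⟩, hk3, rfl, hk1, hk2⟩
      · exact hGc.union (hFcomp k)
      · exact hGne.inl
      · intro x hx
        rcases hx with hx | hx
        · exact hGfar x hx
        · exact hFfar k x hx
    obtain ⟨k₀, hk₀⟩ := Filter.nonempty_of_mem hB
    have hInv₀ : Inv (k₀, Ffun k₀) := ⟨hFcomp k₀, hFne k₀ hk₀, hFfar k₀⟩
    choose stepf hstepf using hstep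
    set Sq : ℕ → {p : ℕ × Set X // Inv p} :=
      fun l => stepf^[l] ⟨(k₀, Ffun k₀), hInv₀⟩ with hSqdef
    have hSq : ∀ l, Sq (l+1) = stepf (Sq l) := by
      intro l
      simp only [hSqdef]
      rw [Function.iterate_succ_apply']
    have hrel : ∀ l, Rel (Sq l).1 (Sq (l+1)).1 := by
      intro l
      rw [hSq l]
      exact hstepf (Sq l)
    set kk : ℕ → ℕ := fun l => (Sq l).1.1 with hkkdef
    set GG : ℕ → Set X := fun l => (Sq l).1.2 with hGGdef
    have hkmono : StrictMono kk := strictMono_nat_of_lt_succ (fun l => (hrel l).1)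
    have hGsucc : ∀ l, GG (l+1) = GG l ∪ Ffun (kk (l+1)) := fun l => (hrel l).2.1
    have hkB : ∀ l, kk (l+1) ∈ 𝒜ᶜ := fun l => (hrel l).2.2.1
    have hΘsmall : ∀ l, Θ (kk (l+1)) {y | infDist y (GG l) < δ} < 2*δ :=
      fun l => (hrel l).2.2.2
    have hGmono : ∀ l m, l ≤ m → GG l ⊆ GG m := by
      intro l m h
      induction m with
      | zero =>
        have : l = 0 := Nat.le_zero.mp h
        rw [this]
      | succ n ih =>
        rcases Nat.lt_or_ge l (n+1) with h2 | h2
        · have h3 : l ≤ n := Nat.lt_succ_iff.mp h2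
          refine subset_trans (ih h3) ?_
          rw [hGsucc n]
          exact Set.subset_union_left
        · have : l = n + 1 := le_antisymm h h2
          rw [this]
    have hFG : ∀ l, Ffun (kk (l+1)) ⊆ GG (l+1) := by
      intro l
      rw [hGsucc l]
      exact Set.subset_union_right
    -- the pieces
    set g : ℕ → X → ℝ := fun l x => b (kk (l+1)) x * φf (kk (l+1)) x * ξf (GG l) x with hgdef
    have hsuppg : ∀ l x, g l x ≠ 0 →
        (Rc < infDist x (↑Sstar : Set X)) ∧ (∃ y ∈ Ffun (kk (l+1)), dist x y < δ/8) ∧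
        (δ/4 < infDist x (GG l)) := by
      intro l x hx
      have hx' : b (kk (l+1)) x * φf (kk (l+1)) x * ξf (GG l) x ≠ 0 := hx
      obtain ⟨hbφne, hξne⟩ := mul_ne_zero_iff.mp hx'
      obtain ⟨hbne, hφne⟩ := mul_ne_zero_iff.mp hbφne
      have hχne : (1:ℝ) - χ x ≠ 0 := by
        intro h
        apply hbne
        rw [hbdef]
        simp only
        rw [h, mul_zero]
      refine ⟨h1χ x hχne, ?_, hξsupp _ x hξne⟩
      have h2 := hφsupp _ x hφne
      obtain ⟨y, hyK, hdy⟩ := (infDist_lt_iff (hKne _)).mp h2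
      refine ⟨y, ⟨hyK, ?_⟩, hdy⟩
      have h3 : infDist x (↑Sstar : Set X) ≤ infDist y (↑Sstar : Set X) + dist x y :=
        infDist_le_infDist_add_dist
      have h1 := h1χ x hχne
      simp only [Set.mem_setOf_eq]
      linarith
    have hdisj : ∀ l l', l < l' → ∀ x, g l x ≠ 0 → g l' x = 0 := by
      intro l l' hll x hgl
      by_contra hgl'
      obtain ⟨_, ⟨y, hyF, hdy⟩, _⟩ := hsuppg l x hgl
      obtain ⟨_, _, hfar'⟩ := hsuppg l' x hgl'
      have hyG : y ∈ GG l' := hGmono (l+1) l' hll (hFG l hyF)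
      have h5 : infDist x (GG l') ≤ dist x y := infDist_le_dist_of_mem hyG
      linarith
    have hgb1 : ∀ l x, |g l x| ≤ 1 := by
      intro l x
      have h1 : |g l x| = |b (kk (l+1)) x| * |φf (kk (l+1)) x| * |ξf (GG l) x| := by
        rw [hgdef]
        simp only
        rw [abs_mul, abs_mul]
      rw [h1]
      have hφa : |φf (kk (l+1)) x| ≤ 1 := abs_le.mpr ⟨by linarith [hφ0 (kk (l+1)) x], hφ1 _ x⟩
      have hξa : |ξf (GG l) x| ≤ 1 := abs_le.mpr ⟨by linarith [hξ0 (GG l) x], hξ1 _ x⟩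
      calc |b (kk (l+1)) x| * |φf (kk (l+1)) x| * |ξf (GG l) x| ≤ 1 * 1 * 1 := by
            apply mul_le_mul _ hξa (abs_nonneg _) (by norm_num)
            apply mul_le_mul (hbb _ x) hφa (abs_nonneg _) (by norm_num)
        _ = 1 := by norm_num
    set Lg : ℝ := (1 + 1/Rc) + 8/δ + 4/δ with hLgdef
    have hLgpos : 0 < Lg := by
      rw [hLgdef]
      positivity
    have hglip : ∀ l, lipb Lg (g l) := by
      intro l
      have h1 : lipb ((1 + 1/Rc) + 8/δ) (fun x => b (kk (l+1)) x * φf (kk (l+1)) x) :=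
        lipb.mul (hblip _) (hφlip _) (hbb _)
          (fun x => abs_le.mpr ⟨by linarith [hφ0 (kk (l+1)) x], hφ1 _ x⟩)
      have h2 := lipb.mul h1 (hξlip (GG l))
        (fun x => by
          rw [abs_mul]
          calc |b (kk (l+1)) x| * |φf (kk (l+1)) x| ≤ 1 * 1 :=
              mul_le_mul (hbb _ x)
                (abs_le.mpr ⟨by linarith [hφ0 (kk (l+1)) x], hφ1 _ x⟩) (abs_nonneg _) one_pos.le
            _ = 1 := mul_one 1)
        (fun x => abs_le.mpr ⟨by linarith [hξ0 (GG l) x], hξ1 _ x⟩)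
      rw [hLgdef]
      exact h2
    set FB : X → ℝ := fun x => ∑' l, g l x with hFBdef
    have hFBx : ∀ x, (FB x = 0 ∧ ∀ l, g l x = 0) ∨
        (∃ l, g l x ≠ 0 ∧ FB x = g l x ∧ ∀ l', l' ≠ l → g l' x = 0) := by
      intro x
      by_cases hx : ∃ l, g l x ≠ 0
      · obtain ⟨l, hl⟩ := hx
        have huniq : ∀ l', l' ≠ l → g l' x = 0 := by
          intro l' hne
          rcases lt_or_gt_of_ne hne with h | h
          · by_contra h0
            exact hl (hdisj l' l h x h0)
          · exact hdisj l l' h x hl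
        exact Or.inr ⟨l, hl, tsum_eq_single l huniq, huniq⟩
      · push_neg at hx
        refine Or.inl ⟨?_, hx⟩
        have he : FB x = g 0 x := tsum_eq_single 0 (fun l' _ => hx l')
        rw [he]
        exact hx 0
    have hFBb : ∀ x, |FB x| ≤ 1 := by
      intro x
      rcases hFBx x with ⟨h0, _⟩ | ⟨l, _, heq, _⟩
      · rw [h0]; norm_num
      · rw [heq]; exact hgb1 l x
    have hFBlip : lipb (2*Lg) FB := by
      intro x y
      have key : ∀ z w : X, FB z - FB w =
          (if hz : ∃ l, g l z ≠ 0 then 0 else 0) + (FB z - FB w) := by intro z w; simp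
      -- case analysis
      rcases hFBx x with ⟨h0x, hallx⟩ | ⟨lx, hnex, heqx, hunx⟩
      · rcases hFBx y with ⟨h0y, _⟩ | ⟨ly, _, heqy, _⟩
        · rw [h0x, h0y]
          simp only [sub_self, abs_zero]
          positivity
        · rw [h0x, heqy]
          have := hglip ly x y
          have hx0 : g ly x = 0 := hallx ly
          rw [hx0] at this
          calc |0 - g ly y| ≤ Lg * dist x y := this
            _ ≤ 2*Lg * dist x y := by nlinarith [dist_nonneg (x := x) (y := y)]
      · rcases hFBx y with ⟨h0y, hally⟩ | ⟨ly, hney, heqy, huny⟩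
        · rw [heqx, h0y]
          have := hglip lx x y
          have hy0 : g lx y = 0 := hally lx
          rw [hy0] at this
          calc |g lx x - 0| ≤ Lg * dist x y := this
            _ ≤ 2*Lg * dist x y := by nlinarith [dist_nonneg (x := x) (y := y)]
        · by_cases hxy : lx = ly
          · rw [heqx, heqy, hxy]
            calc |g ly x - g ly y| ≤ Lg * dist x y := hglip ly x y
              _ ≤ 2*Lg * dist x y := by nlinarith [dist_nonneg (x := x) (y := y)]
          · have h1 : g lx y = 0 := huny lx hxy
            have h2 : g ly x = 0 := hunx ly (Ne.symm hxy)
            rw [heqx, heqy]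
            have e1 := hglip lx x y
            have e2 := hglip ly x y
            rw [h1] at e1
            rw [h2] at e2
            have he : g lx x - g ly y = (g lx x - 0) + (0 - g ly y) := by ring
            rw [he]
            calc |(g lx x - 0) + (0 - g ly y)| ≤ |g lx x - 0| + |0 - g ly y| := abs_add_le _ _
              _ ≤ Lg * dist x y + |0 - g ly y| := by linarith [e1]
              _ ≤ Lg * dist x y + Lg * dist x y := by linarith [e2]
              _ = 2*Lg * dist x y := by ring
    have hgcont : ∀ l, Continuous (g l) := fun l => (hglip l).continuous
    have hWFB := hW FB hFBlip.uniformContinuous ⟨1, hFBb⟩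
    -- the per-step integral estimate
    have hkey : ∀ l, ε₀/2 - 12*δ ≤ (∫ x, FB x ∂M (kk (l+1))) - ∫ x, FB x ∂N (kk (l+1)) := by
      intro l
      set k' : ℕ := kk (l+1) with hk'def
      set O₁ : Set X := {y | infDist y (GG l) < δ/2} with hO₁def
      set O₂ : Set X := {y | Rc < infDist y (↑Sstar : Set X)} ∩
        {y | δ/4 < infDist y (Ffun k')} with hO₂def
      have hO₁meas : MeasurableSet O₁ := by
        have hop : IsOpen O₁ := by
          have he : O₁ = (fun y => infDist y (GG l)) ⁻¹' Set.Iio (δ/2) := rfl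
          rw [he]
          exact isOpen_Iio.preimage (continuous_infDist_pt _)
        exact hop.measurableSet
      have hO₂meas : MeasurableSet O₂ := by
        have hop1 : IsOpen {y : X | Rc < infDist y (↑Sstar : Set X)} := by
          have he : {y : X | Rc < infDist y (↑Sstar : Set X)} =
              (fun y => infDist y (↑Sstar : Set X)) ⁻¹' Set.Ioi Rc := rfl
          rw [he]
          exact isOpen_Ioi.preimage (continuous_infDist_pt _)
        have hop2 : IsOpen {y : X | δ/4 < infDist y (Ffun k')} := by
          have he : {y : X | δ/4 < infDist y (Ffun k')} =
              (fun y => infDist y (Ffun k')) ⁻¹' Set.Ioi (δ/4) := rfl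
          rw [he]
          exact isOpen_Ioi.preimage (continuous_infDist_pt _)
        exact (hop1.inter hop2).measurableSet
      have hKmeas : MeasurableSet ((Kc k')ᶜ) := (hKcomp k').isClosed.measurableSet.compl
      -- measure bounds
      have hMO₁ : ((M k') O₁).toReal ≤ 2*δ := by
        have hsub : O₁ ⊆ {y | infDist y (GG l) < δ} := by
          intro y hy
          simp only [hO₁def, Set.mem_setOf_eq] at hy ⊢
          linarith
        have h1 : ((M k') O₁).toReal ≤ ((M k') {y | infDist y (GG l) < δ}).toReal :=
          ENNReal.toReal_mono (measure_ne_top _ _) (measure_mono hsub)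
        have h2 : ((M k') {y | infDist y (GG l) < δ}).toReal ≤
            Θ k' {y | infDist y (GG l) < δ} := by
          rw [hΘapp]
          have := ENNReal.toReal_nonneg (a := (N k') {y | infDist y (GG l) < δ})
          linarith
        have h3 := hΘsmall l
        linarith
      have hNO₁ : ((N k') O₁).toReal ≤ 2*δ := by
        have hsub : O₁ ⊆ {y | infDist y (GG l) < δ} := by
          intro y hy
          simp only [hO₁def, Set.mem_setOf_eq] at hy ⊢
          linarith
        have h1 : ((N k') O₁).toReal ≤ ((N k') {y | infDist y (GG l) < δ}).toReal :=
          ENNReal.toReal_mono (measure_ne_top _ _) (measure_mono hsub)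
        have h2 : ((N k') {y | infDist y (GG l) < δ}).toReal ≤
            Θ k' {y | infDist y (GG l) < δ} := by
          rw [hΘapp]
          have := ENNReal.toReal_nonneg (a := (M k') {y | infDist y (GG l) < δ})
          linarith
        have h3 := hΘsmall l
        linarith
      have hO₂sub : O₂ ⊆ (Kc k')ᶜ := by
        intro y hy
        simp only [hO₂def, Set.mem_inter_iff, Set.mem_setOf_eq] at hy
        intro hyK
        have hy2 : y ∈ Ffun k' := ⟨hyK, by
          simp only [Set.mem_setOf_eq]
          linarith [hy.1]⟩
        have : infDist y (Ffun k') = 0 := infDist_zero_of_mem hy2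
        rw [this] at hy
        linarith [hy.2]
      have hMO₂ : ((M k') O₂).toReal ≤ δ :=
        le_trans (ENNReal.toReal_mono (measure_ne_top _ _) (measure_mono hO₂sub)) (hKM k')
      have hNO₂ : ((N k') O₂).toReal ≤ δ :=
        le_trans (ENNReal.toReal_mono (measure_ne_top _ _) (measure_mono hO₂sub)) (hKN k')
      -- integrability
      have hintb : ∀ (μ : Measure X) [IsProbabilityMeasure μ], Integrable (b k') μ :=
        fun μ _ => integrable_bdd (hbcont k') 1 (hbb k') μ
      have hintg : ∀ (μ : Measure X) [IsProbabilityMeasure μ], Integrable (g l) μ :=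
        fun μ _ => integrable_bdd (hgcont l) 1 (hgb1 l) μ
      have hintFB : ∀ (μ : Measure X) [IsProbabilityMeasure μ], Integrable FB μ :=
        fun μ _ => integrable_bdd hFBlip.continuous 1 hFBb μ
      -- pointwise bound 1 : b vs g
      have hpt1 : ∀ x, |b k' x - g l x| ≤
          Set.indicator ((Kc k')ᶜ ∪ O₁) (fun _ => (1:ℝ)) x := by
        intro x
        by_cases hx : x ∈ (Kc k')ᶜ ∪ O₁
        · rw [Set.indicator_of_mem hx]
          have he : b k' x - g l x = b k' x * (1 - φf k' x * ξf (GG l) x) := by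
            rw [hgdef]
            ring
          rw [he, abs_mul]
          have h2 : |1 - φf k' x * ξf (GG l) x| ≤ 1 := by
            rw [abs_le]
            constructor
            · nlinarith [hφ0 k' x, hφ1 k' x, hξ0 (GG l) x, hξ1 (GG l) x]
            · nlinarith [hφ0 k' x, hφ1 k' x, hξ0 (GG l) x, hξ1 (GG l) x]
          calc |b k' x| * |1 - φf k' x * ξf (GG l) x| ≤ 1 * 1 :=
              mul_le_mul (hbb k' x) h2 (abs_nonneg _) one_pos.le
            _ = 1 := mul_one 1
        · rw [Set.indicator_of_notMem hx]
          rw [Set.mem_union] at hx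
          push_neg at hx
          obtain ⟨hx1, hx2⟩ := hx
          have hxK : x ∈ Kc k' := by
            by_contra h
            exact hx1 (by simpa using h)
          have hxO : δ/2 ≤ infDist x (GG l) := by
            simp only [hO₁def, Set.mem_setOf_eq] at hx2
            linarith [not_lt.mp hx2]
          have hφe : φf k' x = 1 := hφmem k' x hxK
          have hξe : ξf (GG l) x = 1 := hξeq1 (GG l) x hxO
          have he : g l x = b k' x := by
            rw [hgdef]
            simp only
            rw [hφe, hξe, mul_one, mul_one]
          rw [he, sub_self, abs_zero]
      -- pointwise bound 2 : FB vs g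
      have hpt2 : ∀ x, |FB x - g l x| ≤
          Set.indicator (O₁ ∪ O₂) (fun _ => (1:ℝ)) x := by
        intro x
        rcases hFBx x with ⟨hz, hall⟩ | ⟨l₀, hne, hFBeq, huniq⟩
        · rw [hz, hall l, sub_self, abs_zero]
          exact Set.indicator_nonneg (fun _ _ => by norm_num) x
        · by_cases hl₀ : l₀ = l
          · rw [hl₀] at hFBeq
            rw [hFBeq, sub_self, abs_zero]
            exact Set.indicator_nonneg (fun _ _ => by norm_num) x
          · have hgl0 : g l x = 0 := huniq l (fun h => hl₀ h.symm)
            rw [hFBeq, hgl0, sub_zero]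
            have hmem : x ∈ O₁ ∪ O₂ := by
              rcases lt_or_gt_of_ne hl₀ with h | h
              · left
                obtain ⟨_, ⟨y, hyF, hdy⟩, _⟩ := hsuppg l₀ x hne
                have hyG : y ∈ GG l := hGmono (l₀+1) l h (hFG l₀ hyF)
                have h5 : infDist x (GG l) ≤ dist x y := infDist_le_dist_of_mem hyG
                simp only [hO₁def, Set.mem_setOf_eq]
                linarith
              · right
                obtain ⟨hRc', _, hfar'⟩ := hsuppg l₀ x hne
                have hsub : Ffun k' ⊆ GG l₀ := subset_trans (hFG l) (hGmono (l+1) l₀ h)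
                have h6 : infDist x (GG l₀) ≤ infDist x (Ffun k') :=
                  infDist_le_infDist_of_subset hsub (hFne k' (hkB l))
                simp only [hO₂def, Set.mem_inter_iff, Set.mem_setOf_eq]
                exact ⟨hRc', by linarith⟩
            rw [Set.indicator_of_mem hmem]
            exact hgb1 l₀ x
      -- assemble
      have hunion1 : ∀ (μ : Measure X), IsProbabilityMeasure μ →
          ((μ ((Kc k')ᶜ)).toReal ≤ δ) → ((μ O₁).toReal ≤ 2*δ) →
          ((μ ((Kc k')ᶜ ∪ O₁)).toReal ≤ 3*δ) := by
        intro μ hμ h1 h2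
        have hle : μ ((Kc k')ᶜ ∪ O₁) ≤ μ ((Kc k')ᶜ) + μ O₁ := measure_union_le _ _
        have hne1 : μ ((Kc k')ᶜ) ≠ ⊤ := measure_ne_top _ _
        have hne2 : μ O₁ ≠ ⊤ := measure_ne_top _ _
        have h3 : (μ ((Kc k')ᶜ ∪ O₁)).toReal ≤ (μ ((Kc k')ᶜ) + μ O₁).toReal :=
          ENNReal.toReal_mono (by rw [ENNReal.add_ne_top]; exact ⟨hne1, hne2⟩) hle
        rw [ENNReal.toReal_add hne1 hne2] at h3
        linarith
      have hunion2 : ∀ (μ : Measure X), IsProbabilityMeasure μ →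
          ((μ O₁).toReal ≤ 2*δ) → ((μ O₂).toReal ≤ δ) →
          ((μ (O₁ ∪ O₂)).toReal ≤ 3*δ) := by
        intro μ hμ h1 h2
        have hle : μ (O₁ ∪ O₂) ≤ μ O₁ + μ O₂ := measure_union_le _ _
        have hne1 : μ O₁ ≠ ⊤ := measure_ne_top _ _
        have hne2 : μ O₂ ≠ ⊤ := measure_ne_top _ _
        have h3 : (μ (O₁ ∪ O₂)).toReal ≤ (μ O₁ + μ O₂).toReal :=
          ENNReal.toReal_mono (by rw [ENNReal.add_ne_top]; exact ⟨hne1, hne2⟩) hle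
        rw [ENNReal.toReal_add hne1 hne2] at h3
        linarith
      have hE1M : |(∫ x, b k' x ∂M k') - ∫ x, g l x ∂M k'| ≤ 3*δ := by
        rw [← integral_sub (hintb (M k')) (hintg (M k'))]
        refine le_trans (abs_integral_le_meas (M k') (hKmeas.union hO₁meas)
          ((hintb (M k')).sub (hintg (M k'))) hpt1) ?_
        exact hunion1 (M k') (hM k') (hKM k') hMO₁
      have hE1N : |(∫ x, b k' x ∂N k') - ∫ x, g l x ∂N k'| ≤ 3*δ := by
        rw [← integral_sub (hintb (N k')) (hintg (N k'))]
        refine le_trans (abs_integral_le_meas (N k') (hKmeas.union hO₁meas)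
          ((hintb (N k')).sub (hintg (N k'))) hpt1) ?_
        exact hunion1 (N k') (hN k') (hKN k') hNO₁
      have hE2M : |(∫ x, FB x ∂M k') - ∫ x, g l x ∂M k'| ≤ 3*δ := by
        rw [← integral_sub (hintFB (M k')) (hintg (M k'))]
        refine le_trans (abs_integral_le_meas (M k') (hO₁meas.union hO₂meas)
          ((hintFB (M k')).sub (hintg (M k'))) hpt2) ?_
        exact hunion2 (M k') (hM k') hMO₁ hMO₂
      have hE2N : |(∫ x, FB x ∂N k') - ∫ x, g l x ∂N k'| ≤ 3*δ := by
        rw [← integral_sub (hintFB (N k')) (hintg (N k'))]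
        refine le_trans (abs_integral_le_meas (N k') (hO₁meas.union hO₂meas)
          ((hintFB (N k')).sub (hintg (N k'))) hpt2) ?_
        exact hunion2 (N k') (hN k') hNO₁ hNO₂
      have hbase := hbint k' (hkB l)
      obtain ⟨e1Ma, e1Mb⟩ := abs_le.mp hE1M
      obtain ⟨e1Na, e1Nb⟩ := abs_le.mp hE1N
      obtain ⟨e2Ma, e2Mb⟩ := abs_le.mp hE2M
      obtain ⟨e2Na, e2Nb⟩ := abs_le.mp hE2N
      linarith
    rw [Metric.tendsto_atTop] at hWFB
    obtain ⟨K₀, hK₀⟩ := hWFB (ε₀/8) (by positivity)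
    have hge := hkey K₀
    have hbig : K₀ ≤ kk (K₀+1) :=
      le_trans hkmono.le_apply (le_of_lt (hkmono (lt_add_one K₀)))
    have hcl := hK₀ (kk (K₀+1)) hbig
    rw [Real.dist_eq, sub_zero] at hcl
    have habs := abs_lt.mp hcl
    rw [hδdef] at hge
    linarith [habs.2]

end Part5

namespace Part6
open BLProofAux Part2

variable {X : Type*} [MetricSpace X] [MeasurableSpace X] [BorelSpace X]

lemma tight_of_innerRegular (μ : Measure X) [IsProbabilityMeasure μ] (hreg : μ.InnerRegular)
    (δ' : ℝ) (hδ' : 0 < δ') : ∃ K : Set X, IsCompact K ∧ (μ Kᶜ).toReal ≤ δ' := by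
  rcases le_or_gt 1 δ' with h | h
  · refine ⟨∅, isCompact_empty, ?_⟩
    have h1 : (μ (∅ : Set X)ᶜ).toReal ≤ 1 := by
      rw [Set.compl_empty, measure_univ]
      norm_num
    linarith
  · have h2 : ENNReal.ofReal (1 - δ'/2) < μ Set.univ := by
      rw [measure_univ]
      exact ENNReal.ofReal_lt_one.mpr (by linarith)
    obtain ⟨K, hKu, hKc, hKgt⟩ := hreg.innerRegular MeasurableSet.univ _ h2
    refine ⟨K, hKc, ?_⟩
    have hKmeas : MeasurableSet K := hKc.isClosed.measurableSet
    have hcompl : μ Kᶜ = 1 - μ K := prob_compl_eq_one_sub hKmeas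
    have hK1 : μ K ≤ 1 := prob_le_one
    have htr : (μ Kᶜ).toReal = 1 - (μ K).toReal := by
      rw [hcompl, ENNReal.toReal_sub_of_le hK1 (by norm_num)]
      norm_num
    have hKlow : 1 - δ'/2 ≤ (μ K).toReal := by
      have := (ENNReal.ofReal_lt_iff_lt_toReal (by linarith) (measure_ne_top μ K)).mp hKgt
      linarith
    rw [htr]
    linarith

end Part6

/-- The bounded-Lipschitz distance `‖μ − ν‖_d`. -/
noncomputable def blDist {X : Type*} [MetricSpace X] [MeasurableSpace X]
    (μ ν : Measure X) : ℝ :=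
  ⨆ f : {f : X → ℝ // (∀ x, |f x| ≤ 1) ∧ LipschitzWith 1 f},
    (∫ x, f.1 x ∂μ - ∫ x, f.1 x ∂ν)

/-- if `μ_j`, `ν_j` are tight probability measures and
`∫ f dμ_j − ∫ f dν_j → 0` for every bounded uniformly continuous `f`, then
`‖μ_j − ν_j‖_d → 0`. -/
theorem blDist_tendsto_zero_of_ubWeak
    {X : Type*} [MetricSpace X] [MeasurableSpace X] [BorelSpace X]
    (μ ν : ℕ → Measure X)
    (hμp : ∀ j, IsProbabilityMeasure (μ j)) (hνp : ∀ j, IsProbabilityMeasure (ν j))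
    (hμt : ∀ j, (μ j).InnerRegular) (hνt : ∀ j, (ν j).InnerRegular)
    (hweak : ∀ f : X → ℝ, UniformContinuous f → (∃ M, ∀ x, |f x| ≤ M) →
      Tendsto (fun j => (∫ x, f x ∂μ j) - ∫ x, f x ∂ν j) atTop (nhds 0)) :
    Tendsto (fun j => blDist (μ j) (ν j)) atTop (nhds 0) := by
  classical
  by_contra hcon
  haveI : ∀ j, IsProbabilityMeasure (μ j) := hμp
  haveI : ∀ j, IsProbabilityMeasure (ν j) := hνp
  -- the zero test function
  set z : {f : X → ℝ // (∀ x, |f x| ≤ 1) ∧ LipschitzWith 1 f} :=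
    ⟨fun _ => 0, fun x => by norm_num, (LipschitzWith.const 0).weaken zero_le_one⟩ with hzdef
  haveI : Nonempty {f : X → ℝ // (∀ x, |f x| ≤ 1) ∧ LipschitzWith 1 f} := ⟨z⟩
  have hbdd : ∀ j, BddAbove (Set.range fun f : {f : X → ℝ // (∀ x, |f x| ≤ 1) ∧
      LipschitzWith 1 f} => (∫ x, f.1 x ∂μ j) - ∫ x, f.1 x ∂ν j) := by
    intro j
    refine ⟨2, ?_⟩
    rintro w ⟨f, rfl⟩
    have h1 : |∫ x, f.1 x ∂μ j| ≤ 1 := Part2.abs_integral_le (μ j) f.2.1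
    have h2 : |∫ x, f.1 x ∂ν j| ≤ 1 := Part2.abs_integral_le (ν j) f.2.1
    obtain ⟨h1a, h1b⟩ := abs_le.mp h1
    obtain ⟨h2a, h2b⟩ := abs_le.mp h2
    simp only
    linarith
  have hnonneg : ∀ j, 0 ≤ blDist (μ j) (ν j) := by
    intro j
    have h1 := le_ciSup (hbdd j) z
    have h2 : (∫ x, z.1 x ∂μ j) - ∫ x, z.1 x ∂ν j = 0 := by
      have hz1 : z.1 = fun _ => (0:ℝ) := rfl
      rw [hz1]
      simp [integral_zero]
    rw [h2] at h1
    exact h1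
  -- extract bad subsequence
  rw [Metric.tendsto_atTop] at hcon
  push_neg at hcon
  obtain ⟨ε, hε, hfreq⟩ := hcon
  have hfr : ∃ᶠ n in atTop, ε ≤ dist (blDist (μ n) (ν n)) 0 := frequently_atTop.mpr hfreq
  obtain ⟨φ, hφmono, hφP⟩ := Filter.extraction_of_frequently_atTop hfr
  have hεbl : ∀ k, ε ≤ blDist (μ (φ k)) (ν (φ k)) := by
    intro k
    have := hφP k
    rw [Real.dist_eq, sub_zero, abs_of_nonneg (hnonneg (φ k))] at this
    exact this
  set ε₀ : ℝ := min (ε/2) 1 with hε₀def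
  have hε₀pos : 0 < ε₀ := lt_min (by positivity) one_pos
  have hε₀le : ε₀ ≤ 1 := min_le_right _ _
  -- witnesses
  have hwit : ∀ k, ∃ f : X → ℝ, (∀ x, |f x| ≤ 1) ∧ BLProofAux.lipb 1 f ∧
      ε₀ ≤ (∫ x, f x ∂μ (φ k)) - ∫ x, f x ∂ν (φ k) := by
    intro k
    have h1 : ε/2 < blDist (μ (φ k)) (ν (φ k)) := lt_of_lt_of_le (by linarith) (hεbl k)
    have h2 : ε/2 < ⨆ f : {f : X → ℝ // (∀ x, |f x| ≤ 1) ∧ LipschitzWith 1 f},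
        ((∫ x, f.1 x ∂μ (φ k)) - ∫ x, f.1 x ∂ν (φ k)) := h1
    obtain ⟨f, hf⟩ := exists_lt_of_lt_ciSup h2
    refine ⟨f.1, f.2.1, ?_, ?_⟩
    · intro x y
      have := f.2.2.dist_le_mul x y
      rw [Real.dist_eq] at this
      simpa using this
    · calc ε₀ ≤ ε/2 := min_le_left _ _
        _ ≤ _ := hf.le
  -- tightness
  have ht : ∀ (k : ℕ) (δ' : ℝ), 0 < δ' → ∃ K : Set X, IsCompact K ∧
      ((μ (φ k)) Kᶜ).toReal ≤ δ' ∧ ((ν (φ k)) Kᶜ).toReal ≤ δ' := by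
    intro k δ' hδ'
    obtain ⟨K₁, hK₁c, hK₁⟩ := Part6.tight_of_innerRegular (μ (φ k)) (hμt (φ k)) δ' hδ'
    obtain ⟨K₂, hK₂c, hK₂⟩ := Part6.tight_of_innerRegular (ν (φ k)) (hνt (φ k)) δ' hδ'
    refine ⟨K₁ ∪ K₂, hK₁c.union hK₂c, ?_, ?_⟩
    · refine le_trans (ENNReal.toReal_mono (measure_ne_top _ _)
        (measure_mono (Set.compl_subset_compl.mpr Set.subset_union_left))) hK₁
    · refine le_trans (ENNReal.toReal_mono (measure_ne_top _ _)
        (measure_mono (Set.compl_subset_compl.mpr Set.subset_union_right))) hK₂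
  -- conclude
  exact Part5.main (fun k => μ (φ k)) (fun k => ν (φ k)) (fun k => hμp (φ k))
    (fun k => hνp (φ k)) ht ε₀ hε₀pos hε₀le hwit
    (fun g h1 h2 => (hweak g h1 h2).comp hφmono.tendsto_atTop)
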